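/- Let L > 0 and K > 0. Then there exists M = M(K,L) > 0 with the following property: for every g ∈ L²(0,L) with ∫₀^L g(σ)² dσ ≤ K and every θ : [0,L] → ℝ of the form θ(s) = θ(0) + ∫₀^s g(σ) dσ which satisfies ∫₀^L cos θ(s) ds = 0, ∫₀^L sin θ(s) ds = 0 and θ(L) − θ(0) ∈ 2πℤ, the matrix Π(θ) is invertible and the operator norm of Π(θ)^{-1} satisfies ‖Π(θ)^{-1}‖ ≤ M. Equivalently, there exists m = m(K,L) > 0 such that det Π(θ) ≥ m for all such θ. -/

import Mathlib

open MeasureTheory Set intervalIntegral RealInnerProductSpace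

lemma cos_lip (a b : ℝ) : |Real.cos a - Real.cos b| ≤ |a - b| := by
  rw [Real.cos_sub_cos, abs_mul, abs_mul]
  have h1 := Real.abs_sin_le_one ((a + b) / 2)
  have h2 := Real.abs_sin_le_abs (x := (a - b) / 2)
  have : |(a - b) / 2| = |a - b| / 2 := by rw [abs_div]; norm_num
  have h3 : |(-2:ℝ)| = 2 := by norm_num
  rw [h3]
  nlinarith [abs_nonneg (Real.sin ((a - b) / 2)), abs_nonneg (a - b)]

lemma cs_interval {g : ℝ → ℝ} {a b : ℝ} (hab : a ≤ b)
    (hg : IntervalIntegrable g volume a b)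
    (hg2 : IntervalIntegrable (fun s => g s ^ 2) volume a b) :
    (∫ s in a..b, g s) ^ 2 ≤ (b - a) * ∫ s in a..b, g s ^ 2 := by
  rcases eq_or_lt_of_le hab with rfl | h
  · simp
  set T := b - a with hT
  have hT0 : 0 < T := by simp [hT]; linarith
  set c : ℝ := (∫ s in a..b, g s) / T with hc
  have key : (0:ℝ) ≤ ∫ s in a..b, (g s - c) ^ 2 :=
    intervalIntegral.integral_nonneg hab (fun s _ => sq_nonneg _)
  have expand : (∫ s in a..b, (g s - c) ^ 2)
      = (∫ s in a..b, g s ^ 2) - (2 * c) * (∫ s in a..b, g s) + T * c ^ 2 := by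
    have hfun : (fun s => (g s - c) ^ 2) = fun s => (g s ^ 2 - (2 * c) * g s) + c ^ 2 := by
      funext s; ring
    rw [hfun, intervalIntegral.integral_add (hg2.sub (hg.const_mul _)) intervalIntegrable_const,
      intervalIntegral.integral_sub hg2 (hg.const_mul _),
      intervalIntegral.integral_const_mul, intervalIntegral.integral_const]
    simp [hT]
  rw [expand] at key
  have hI : (∫ s in a..b, g s) = c * T := by rw [hc, div_mul_cancel₀ _ hT0.ne']
  rw [hI] at key ⊢
  nlinarith [sq_nonneg c, hT0]

lemma hitting {h : ℝ → ℝ} {u v c : ℝ} (huv : u ≤ v) (hc : 0 < c)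
    (hcont : ContinuousOn h (Icc u v)) (hu : c ≤ h u) (hv : h v ≤ -c) :
    ∃ t₁ t₂, u ≤ t₁ ∧ t₁ ≤ t₂ ∧ t₂ ≤ v ∧ h t₁ = c ∧ h t₂ = -c ∧
      ∀ t ∈ Icc t₁ t₂, |h t| ≤ c := by
  -- first hitting time of -c
  set S₂ : Set ℝ := Icc u v ∩ h ⁻¹' Iic (-c) with hS₂
  have hS₂closed : IsClosed S₂ := hcont.preimage_isClosed_of_isClosed isClosed_Icc isClosed_Iic
  have hS₂ne : S₂.Nonempty := ⟨v, ⟨huv, le_rfl⟩, hv⟩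
  have hS₂bdd : BddBelow S₂ := ⟨u, fun t ht => ht.1.1⟩
  set t₂ := sInf S₂ with ht₂def
  have ht₂mem : t₂ ∈ S₂ := hS₂closed.csInf_mem hS₂ne hS₂bdd
  have ht₂min : ∀ t ∈ Icc u v, t < t₂ → -c < h t := by
    intro t ht hlt
    by_contra hle
    push_neg at hle
    exact absurd (csInf_le hS₂bdd ⟨ht, hle⟩) (not_le.2 hlt)
  obtain ⟨⟨hut₂, ht₂v⟩, ht₂le⟩ := ht₂mem
  rw [Set.mem_preimage, Set.mem_Iic] at ht₂le
  -- last time ≥ c before t₂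
  set S₁ : Set ℝ := Icc u t₂ ∩ h ⁻¹' Ici c with hS₁
  have hIccsub : Icc u t₂ ⊆ Icc u v := Icc_subset_Icc le_rfl ht₂v
  have hS₁closed : IsClosed S₁ :=
    (hcont.mono hIccsub).preimage_isClosed_of_isClosed isClosed_Icc isClosed_Ici
  have hS₁ne : S₁.Nonempty := ⟨u, ⟨le_rfl, hut₂⟩, hu⟩
  have hS₁bdd : BddAbove S₁ := ⟨t₂, fun t ht => ht.1.2⟩
  set t₁ := sSup S₁ with ht₁def
  have ht₁mem : t₁ ∈ S₁ := hS₁closed.csSup_mem hS₁ne hS₁bdd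
  have ht₁max : ∀ t ∈ Icc u t₂, t₁ < t → h t < c := by
    intro t ht hlt
    by_contra hle
    push_neg at hle
    exact absurd (le_csSup hS₁bdd ⟨ht, hle⟩) (not_le.2 hlt)
  obtain ⟨⟨hut₁, ht₁t₂⟩, ht₁ge⟩ := ht₁mem
  rw [Set.mem_preimage, Set.mem_Ici] at ht₁ge
  have ht₁lt : t₁ < t₂ := lt_of_le_of_ne ht₁t₂ (by
    intro hEq
    rw [hEq] at ht₁ge
    linarith)
  have hcont12 : ContinuousOn h (Icc t₁ t₂) :=
    hcont.mono (Icc_subset_Icc hut₁ ht₂v)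
  -- exact values via IVT
  have ht₂val : h t₂ = -c := by
    by_contra hne
    have hlt : h t₂ < -c := lt_of_le_of_ne ht₂le hne
    have : -c ∈ Ioo (h t₂) (h t₁) := ⟨hlt, by linarith⟩
    obtain ⟨t, htmem, htval⟩ := intermediate_value_Ioo' ht₁t₂ hcont12 this
    exact absurd (ht₂min t ⟨le_trans hut₁ htmem.1.le, le_trans htmem.2.le ht₂v⟩ htmem.2)
      (by rw [htval]; simp)

  have ht₁val : h t₁ = c := by
    by_contra hne
    have hlt : c < h t₁ := lt_of_le_of_ne ht₁ge (Ne.symm hne)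
    have : c ∈ Ioo (h t₂) (h t₁) := ⟨by rw [ht₂val]; linarith, hlt⟩
    obtain ⟨t, htmem, htval⟩ := intermediate_value_Ioo' ht₁t₂ hcont12 this
    exact absurd (ht₁max t ⟨le_trans hut₁ htmem.1.le, htmem.2.le⟩ htmem.1)
      (by rw [htval]; simp [hc.le])
  refine ⟨t₁, t₂, hut₁, ht₁t₂, ht₂v, ht₁val, ht₂val, ?_⟩
  intro t ht
  rw [abs_le]
  constructor
  · rcases eq_or_lt_of_le ht.2 with rfl | hlt
    · rw [ht₂val]
    · exact (ht₂min t ⟨le_trans hut₁ ht.1, le_trans ht.2 ht₂v⟩ hlt).le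
  · rcases eq_or_lt_of_le ht.1 with rfl | hlt
    · rw [ht₁val]
    · exact (ht₁max t ⟨le_trans hut₁ ht.1, ht.2⟩ hlt).le

set_option maxHeartbeats 1000000 in
lemma key_lower (L K : ℝ) (hL : 0 < L) (hK : 0 < K) (g θ : ℝ → ℝ)
    (hg : IntegrableOn g (Icc 0 L))
    (hg2 : IntegrableOn (fun s => g s ^ 2) (Icc 0 L))
    (hgK : (∫ s in (0:ℝ)..L, g s ^ 2) ≤ K)
    (hθ : ∀ s ∈ Icc (0:ℝ) L, θ s = θ 0 + ∫ σ in (0:ℝ)..s, g σ)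
    (hθc : ContinuousOn θ (Icc 0 L))
    (φ : ℝ)
    (hcos : (∫ s in (0:ℝ)..L, Real.cos (θ s - φ)) = 0) :
    min (L / 2) (1 / (8 * K)) ≤ ∫ s in (0:ℝ)..L, Real.sin (θ s - φ) ^ 2 := by
  set m := min (L / 2) (1 / (8 * K)) with hm
  have hm1 : m ≤ L / 2 := min_le_left _ _
  have hm2 : m ≤ 1 / (8 * K) := min_le_right _ _
  by_contra hcon
  push_neg at hcon
  set ψ : ℝ → ℝ := fun s => θ s - φ with hψ
  have hψc : ContinuousOn ψ (Icc 0 L) := hθc.sub continuousOn_const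
  have huicc : uIcc (0:ℝ) L = Icc 0 L := uIcc_of_le hL.le
  -- integrability facts
  have hcosI : IntervalIntegrable (fun s => Real.cos (ψ s)) volume 0 L :=
    (Real.continuous_cos.comp_continuousOn hψc).intervalIntegrable_of_Icc hL.le
  have hcos2I : IntervalIntegrable (fun s => Real.cos (ψ s) ^ 2) volume 0 L :=
    ((Real.continuous_cos.comp_continuousOn hψc).pow 2).intervalIntegrable_of_Icc hL.le
  have hsin2I : IntervalIntegrable (fun s => Real.sin (ψ s) ^ 2) volume 0 L :=
    ((Real.continuous_sin.comp_continuousOn hψc).pow 2).intervalIntegrable_of_Icc hL.le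
  set I := ∫ s in (0:ℝ)..L, Real.sin (ψ s) ^ 2 with hI
  have hInn : 0 ≤ I := intervalIntegral.integral_nonneg hL.le (fun s _ => sq_nonneg _)
  have hcos2 : (∫ s in (0:ℝ)..L, Real.cos (ψ s) ^ 2) = L - I := by
    have : (∫ s in (0:ℝ)..L, (Real.sin (ψ s) ^ 2 + Real.cos (ψ s) ^ 2)) = L := by
      rw [intervalIntegral.integral_congr (g := fun _ => (1:ℝ))
        (fun s _ => Real.sin_sq_add_cos_sq (ψ s))]
      simp
    rw [intervalIntegral.integral_add hsin2I hcos2I] at this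
    linarith
  -- existence of points with cos ψ ≥ 1/4 and ≤ -1/4
  have hmL : m < L := by
    have : 2⁻¹ * L < L := by linarith
    calc m ≤ L / 2 := hm1
    _ < L := by linarith
  have h1 : ∃ s ∈ Icc (0:ℝ) L, 1 / 4 ≤ Real.cos (ψ s) := by
    by_contra hno
    push_neg at hno
    have hpt : ∀ s ∈ Icc (0:ℝ) L, Real.cos (ψ s) ^ 2 ≤ 1/4 - (3/4) * Real.cos (ψ s) := by
      intro s hs
      have h1 := (hno s hs).le
      have h2 : -1 ≤ Real.cos (ψ s) := Real.neg_one_le_cos _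
      nlinarith
    have hmono := intervalIntegral.integral_mono_on hL.le hcos2I
      (intervalIntegrable_const.sub (hcosI.const_mul _)) hpt
    rw [intervalIntegral.integral_sub intervalIntegrable_const (hcosI.const_mul _),
      intervalIntegral.integral_const_mul, hcos, intervalIntegral.integral_const] at hmono
    rw [hcos2] at hmono
    simp at hmono
    -- L - I ≤ L/4 - 0
    have : L - I ≤ (L - 0) * (1/4) := by linarith
    have hLm : m ≤ L / 2 := hm1
    nlinarith
  have h2 : ∃ s ∈ Icc (0:ℝ) L, Real.cos (ψ s) ≤ -(1/4) := by
    by_contra hno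
    push_neg at hno
    have hpt : ∀ s ∈ Icc (0:ℝ) L, Real.cos (ψ s) ^ 2 ≤ 1/4 + (3/4) * Real.cos (ψ s) := by
      intro s hs
      have h1 := (hno s hs).le
      have h2 : Real.cos (ψ s) ≤ 1 := Real.cos_le_one _
      nlinarith
    have hmono := intervalIntegral.integral_mono_on hL.le hcos2I
      (intervalIntegrable_const.add (hcosI.const_mul _)) hpt
    rw [intervalIntegral.integral_add intervalIntegrable_const (hcosI.const_mul _),
      intervalIntegral.integral_const_mul, hcos, intervalIntegral.integral_const] at hmono
    rw [hcos2] at hmono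
    simp at hmono
    have : L - I ≤ (L - 0) * (1/4) := by linarith
    nlinarith
  obtain ⟨s₁, hs₁mem, hs₁⟩ := h1
  obtain ⟨s₂, hs₂mem, hs₂⟩ := h2
  -- get crossing interval [t₁, t₂] ⊆ [0, L]
  have hcross : ∃ t₁ t₂, 0 ≤ t₁ ∧ t₁ ≤ t₂ ∧ t₂ ≤ L ∧
      |Real.cos (ψ t₂) - Real.cos (ψ t₁)| = 1/2 ∧
      ∀ t ∈ Icc t₁ t₂, |Real.cos (ψ t)| ≤ 1/4 := by
    rcases le_total s₁ s₂ with hord | hord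
    · obtain ⟨t₁, t₂, h1', h2', h3', h4', h5', h6'⟩ :=
        hitting (h := fun t => Real.cos (ψ t)) (u := s₁) (v := s₂) (c := 1/4) hord (by norm_num)
          ((Real.continuous_cos.comp_continuousOn hψc).mono
            (Icc_subset_Icc hs₁mem.1 hs₂mem.2)) hs₁ hs₂
      exact ⟨t₁, t₂, le_trans hs₁mem.1 h1', h2', le_trans h3' hs₂mem.2,
        by rw [h4', h5']; norm_num, h6'⟩
    · obtain ⟨t₁, t₂, h1', h2', h3', h4', h5', h6'⟩ :=
        hitting (h := fun t => -Real.cos (ψ t)) (u := s₂) (v := s₁) (c := 1/4) hord (by norm_num)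
          (((Real.continuous_cos.comp_continuousOn hψc).mono
            (Icc_subset_Icc hs₂mem.1 hs₁mem.2)).neg) (by linarith) (by linarith)
      refine ⟨t₁, t₂, le_trans hs₂mem.1 h1', h2', le_trans h3' hs₁mem.2, ?_, ?_⟩
      · have e1 : Real.cos (ψ t₁) = -(1/4) := by linarith [h4']
        have e2 : Real.cos (ψ t₂) = 1/4 := by linarith [h5']
        rw [e1, e2]; norm_num
      · intro t ht
        have := h6' t ht
        rwa [abs_neg] at this
  obtain ⟨t₁, t₂, h0t₁, ht₁t₂, ht₂L, hdiff, hband⟩ := hcross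
  -- ψ moves by at least 1/2
  have hψmove : (1:ℝ)/2 ≤ |ψ t₂ - ψ t₁| := by
    calc (1:ℝ)/2 = |Real.cos (ψ t₂) - Real.cos (ψ t₁)| := hdiff.symm
    _ ≤ |ψ t₂ - ψ t₁| := cos_lip _ _
  -- ψ t₂ - ψ t₁ = ∫_{t₁}^{t₂} g
  have ht₁mem : t₁ ∈ Icc (0:ℝ) L := ⟨h0t₁, le_trans ht₁t₂ ht₂L⟩
  have ht₂mem : t₂ ∈ Icc (0:ℝ) L := ⟨le_trans h0t₁ ht₁t₂, ht₂L⟩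
  have hgint : ∀ t ∈ Icc (0:ℝ) L, IntervalIntegrable g volume 0 t := by
    intro t ht
    apply (hg.mono_set _).intervalIntegrable
    rw [uIcc_of_le ht.1]
    exact Icc_subset_Icc le_rfl ht.2
  have hψdiff : ψ t₂ - ψ t₁ = ∫ σ in t₁..t₂, g σ := by
    have e2 := hθ t₂ ht₂mem
    have e1 := hθ t₁ ht₁mem
    have : ψ t₂ - ψ t₁ = (∫ σ in (0:ℝ)..t₂, g σ) - ∫ σ in (0:ℝ)..t₁, g σ := by
      simp only [hψ]; rw [e1, e2]; ring
    rw [this, intervalIntegral.integral_interval_sub_left (hgint t₂ ht₂mem) (hgint t₁ ht₁mem)]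
  -- Cauchy–Schwarz: t₂ - t₁ ≥ 1/(4K)
  have hgsub : IntervalIntegrable g volume t₁ t₂ := by
    apply (hg.mono_set _).intervalIntegrable
    rw [uIcc_of_le ht₁t₂]
    exact Icc_subset_Icc h0t₁ ht₂L
  have hg2sub : IntervalIntegrable (fun s => g s ^ 2) volume t₁ t₂ := by
    apply (hg2.mono_set _).intervalIntegrable
    rw [uIcc_of_le ht₁t₂]
    exact Icc_subset_Icc h0t₁ ht₂L
  have hcs := cs_interval ht₁t₂ hgsub hg2sub
  have hg2L : IntervalIntegrable (fun s => g s ^ 2) volume 0 L := by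
    apply IntegrableOn.intervalIntegrable
    rwa [uIcc_of_le hL.le]
  have hsubK : (∫ s in t₁..t₂, g s ^ 2) ≤ K := by
    have h1 : (∫ s in t₁..t₂, g s ^ 2) ≤ ∫ s in (0:ℝ)..L, g s ^ 2 :=
      intervalIntegral.integral_mono_interval h0t₁ ht₁t₂ ht₂L
        (Filter.Eventually.of_forall fun s => sq_nonneg _) hg2L
    linarith
  have hsub2nn : (0:ℝ) ≤ ∫ s in t₁..t₂, g s ^ 2 :=
    intervalIntegral.integral_nonneg ht₁t₂ (fun s _ => sq_nonneg _)
  -- 1/4 ≤ (t₂ - t₁) K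
  have hquarter : (1:ℝ)/4 ≤ (t₂ - t₁) * K := by
    have habs : (1:ℝ)/2 ≤ |∫ σ in t₁..t₂, g σ| := by rwa [hψdiff] at hψmove
    have hsq : (1:ℝ)/4 ≤ (∫ σ in t₁..t₂, g σ) ^ 2 := by
        nlinarith [sq_abs (∫ σ in t₁..t₂, g σ), sq_nonneg (|∫ σ in t₁..t₂, g σ| - 1/2),
        abs_nonneg (∫ σ in t₁..t₂, g σ)]
    calc (1:ℝ)/4 ≤ (∫ σ in t₁..t₂, g σ) ^ 2 := hsq
    _ ≤ (t₂ - t₁) * ∫ s in t₁..t₂, g s ^ 2 := hcs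
    _ ≤ (t₂ - t₁) * K := by
        apply mul_le_mul_of_nonneg_left hsubK
        linarith
  -- lower bound on I
  have hIlow : (15:ℝ)/16 * (t₂ - t₁) ≤ I := by
    have hs2band : ∀ t ∈ Icc t₁ t₂, (15:ℝ)/16 ≤ Real.sin (ψ t) ^ 2 := by
      intro t ht
      have hb := hband t ht
      have hpyth := Real.sin_sq_add_cos_sq (ψ t)
      have : Real.cos (ψ t) ^ 2 ≤ 1/16 := by
        nlinarith [sq_abs (Real.cos (ψ t)), abs_nonneg (Real.cos (ψ t))]
      linarith
    have hs2subI : IntervalIntegrable (fun s => Real.sin (ψ s) ^ 2) volume t₁ t₂ :=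
      hsin2I.mono_set (by rw [uIcc_of_le ht₁t₂, uIcc_of_le hL.le]; exact Icc_subset_Icc h0t₁ ht₂L)
    have h1 : (15:ℝ)/16 * (t₂ - t₁) ≤ ∫ s in t₁..t₂, Real.sin (ψ s) ^ 2 := by
      have := intervalIntegral.integral_mono_on ht₁t₂ intervalIntegrable_const hs2subI hs2band
      rw [intervalIntegral.integral_const] at this
      calc (15:ℝ)/16 * (t₂ - t₁) = (t₂ - t₁) * (15/16) := by ring
      _ ≤ _ := this
    have h2 : (∫ s in t₁..t₂, Real.sin (ψ s) ^ 2) ≤ I :=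
      intervalIntegral.integral_mono_interval h0t₁ ht₁t₂ ht₂L
        (Filter.Eventually.of_forall fun s => sq_nonneg _) hsin2I
    linarith
  -- contradiction
  have h4K : (0:ℝ) < 4 * K := by positivity
  have hKt : 1/(4*K) ≤ t₂ - t₁ := by
    rw [div_le_iff₀ h4K]
    nlinarith
  have hfin : 1/(8*K) ≤ 15/16 * (1/(4*K)) := by
    have he : (15:ℝ)/16 * (1/(4*K)) = 15/(64*K) := by ring
    rw [he, div_le_div_iff₀ (by positivity) (by positivity)]
    nlinarith
  have hlast : (15:ℝ)/16 * (1/(4*K)) ≤ I := by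
    have h15 : (15:ℝ)/16 * (1/(4*K)) ≤ 15/16 * (t₂ - t₁) := by nlinarith
    linarith
  linarith

set_option maxHeartbeats 1000000 in
lemma quad_form (L K : ℝ) (hL : 0 < L) (hK : 0 < K) (g θ : ℝ → ℝ)
    (hg : IntegrableOn g (Icc 0 L))
    (hg2 : IntegrableOn (fun s => g s ^ 2) (Icc 0 L))
    (hgK : (∫ s in (0:ℝ)..L, g s ^ 2) ≤ K)
    (hθ : ∀ s ∈ Icc (0:ℝ) L, θ s = θ 0 + ∫ σ in (0:ℝ)..s, g σ)
    (hθc : ContinuousOn θ (Icc 0 L))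
    (hcosθ : (∫ s in (0:ℝ)..L, Real.cos (θ s)) = 0)
    (hsinθ : (∫ s in (0:ℝ)..L, Real.sin (θ s)) = 0)
    (a b : ℝ) :
    min (L / 2) (1 / (8 * K)) * (a ^ 2 + b ^ 2) ≤
      a ^ 2 * (∫ s in (0:ℝ)..L, Real.sin (θ s) ^ 2)
      - 2 * a * b * (∫ s in (0:ℝ)..L, Real.sin (θ s) * Real.cos (θ s))
      + b ^ 2 * (∫ s in (0:ℝ)..L, Real.cos (θ s) ^ 2) := by
  set m := min (L / 2) (1 / (8 * K)) with hm
  set A := ∫ s in (0:ℝ)..L, Real.sin (θ s) ^ 2 with hA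
  set B := ∫ s in (0:ℝ)..L, Real.sin (θ s) * Real.cos (θ s) with hB
  set C := ∫ s in (0:ℝ)..L, Real.cos (θ s) ^ 2 with hC
  have hsc : ContinuousOn (fun s => Real.sin (θ s)) (Icc 0 L) :=
    Real.continuous_sin.comp_continuousOn hθc
  have hcc : ContinuousOn (fun s => Real.cos (θ s)) (Icc 0 L) :=
    Real.continuous_cos.comp_continuousOn hθc
  have hSI : IntervalIntegrable (fun s => Real.sin (θ s)) volume 0 L :=
    hsc.intervalIntegrable_of_Icc hL.le
  have hCI : IntervalIntegrable (fun s => Real.cos (θ s)) volume 0 L :=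
    hcc.intervalIntegrable_of_Icc hL.le
  have hS2 : IntervalIntegrable (fun s => Real.sin (θ s) ^ 2) volume 0 L :=
    (hsc.pow 2).intervalIntegrable_of_Icc hL.le
  have hC2 : IntervalIntegrable (fun s => Real.cos (θ s) ^ 2) volume 0 L :=
    (hcc.pow 2).intervalIntegrable_of_Icc hL.le
  have hSC : IntervalIntegrable (fun s => Real.sin (θ s) * Real.cos (θ s)) volume 0 L :=
    (hsc.mul hcc).intervalIntegrable_of_Icc hL.le
  have hexp : ∀ u v : ℝ,
      (∫ s in (0:ℝ)..L, (u * Real.sin (θ s) - v * Real.cos (θ s)) ^ 2)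
        = u ^ 2 * A - 2 * u * v * B + v ^ 2 * C := by
    intro u v
    have hfun : (fun s => (u * Real.sin (θ s) - v * Real.cos (θ s)) ^ 2)
        = fun s => (u ^ 2 * Real.sin (θ s) ^ 2 - (2 * u * v) * (Real.sin (θ s) * Real.cos (θ s)))
          + v ^ 2 * Real.cos (θ s) ^ 2 := by
      funext s; ring
    rw [hfun, intervalIntegral.integral_add ((hS2.const_mul _).sub (hSC.const_mul _))
        (hC2.const_mul _),
      intervalIntegral.integral_sub (hS2.const_mul _) (hSC.const_mul _),
      intervalIntegral.integral_const_mul, intervalIntegral.integral_const_mul,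
      intervalIntegral.integral_const_mul]
  have hunit : ∀ u v : ℝ, u ^ 2 + v ^ 2 = 1 →
      m ≤ ∫ s in (0:ℝ)..L, (u * Real.sin (θ s) - v * Real.cos (θ s)) ^ 2 := by
    intro u v huv
    set z : ℂ := ⟨u, v⟩ with hz
    have hzne : z ≠ 0 := by
      intro h
      rw [Complex.ext_iff] at h
      simp [hz] at h
      obtain ⟨h1, h2⟩ := h
      rw [h1, h2] at huv
      norm_num at huv
    have habs : ‖z‖ = 1 := by
      rw [Complex.norm_def, Complex.normSq_mk]
      rw [show u * u + v * v = 1 by nlinarith]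
      exact Real.sqrt_one
    set φ := Complex.arg z with hφ
    have hcosφ : Real.cos φ = u := by
      rw [hφ, Complex.cos_arg hzne, habs]
      simp [hz]
    have hsinφ : Real.sin φ = v := by
      rw [hφ, Complex.sin_arg, habs]
      simp [hz]
    have hcong : (∫ s in (0:ℝ)..L, (u * Real.sin (θ s) - v * Real.cos (θ s)) ^ 2)
        = ∫ s in (0:ℝ)..L, Real.sin (θ s - φ) ^ 2 := by
      apply intervalIntegral.integral_congr
      intro s _
      simp only [Real.sin_sub, hcosφ, hsinφ]
      ring
    have hcos0 : (∫ s in (0:ℝ)..L, Real.cos (θ s - φ)) = 0 := by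
      have hfun : (fun s => Real.cos (θ s - φ))
          = fun s => Real.cos φ * Real.cos (θ s) + Real.sin φ * Real.sin (θ s) := by
        funext s; rw [Real.cos_sub]; ring
      rw [hfun, intervalIntegral.integral_add (hCI.const_mul _) (hSI.const_mul _),
        intervalIntegral.integral_const_mul, intervalIntegral.integral_const_mul,
        hcosθ, hsinθ]
      ring
    rw [hcong]
    exact key_lower L K hL hK g θ hg hg2 hgK hθ hθc φ hcos0
  -- general case by scaling
  rcases eq_or_lt_of_le (by positivity : (0:ℝ) ≤ a ^ 2 + b ^ 2) with hab | hab
  · have ha0 : a = 0 := by nlinarith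
    have hb0 : b = 0 := by nlinarith
    rw [← hab, ha0, hb0]
    simp
  · set r := Real.sqrt (a ^ 2 + b ^ 2) with hr
    have hr0 : 0 < r := Real.sqrt_pos.2 hab
    have hr2 : r ^ 2 = a ^ 2 + b ^ 2 := Real.sq_sqrt (by positivity)
    have huv : (a / r) ^ 2 + (b / r) ^ 2 = 1 := by
      field_simp
      linarith [hr2]
    have h1 := hunit (a / r) (b / r) huv
    rw [hexp (a / r) (b / r)] at h1
    have h2 : (a / r) ^ 2 * A - 2 * (a / r) * (b / r) * B + (b / r) ^ 2 * C
        = (a ^ 2 * A - 2 * a * b * B + b ^ 2 * C) / (a ^ 2 + b ^ 2) := by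
      rw [← hr2]
      field_simp
    rw [h2] at h1
    rw [← le_div_iff₀ hab]
    exact h1

noncomputable def PiMat (L : ℝ) (θ : ℝ → ℝ) : Matrix (Fin 2) (Fin 2) ℝ :=
  !![∫ s in (0:ℝ)..L, Real.sin (θ s) ^ 2, -(∫ s in (0:ℝ)..L, Real.sin (θ s) * Real.cos (θ s));
     -(∫ s in (0:ℝ)..L, Real.sin (θ s) * Real.cos (θ s)), ∫ s in (0:ℝ)..L, Real.cos (θ s) ^ 2]

/-- Operator norm of a 2×2 real matrix, acting on Euclidean ℝ². -/
noncomputable def opNorm (A : Matrix (Fin 2) (Fin 2) ℝ) : ℝ :=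
  ‖LinearMap.toContinuousLinearMap (Matrix.toEuclideanLin A)‖

set_option maxHeartbeats 1000000 in
/-- uniform bound on `‖Π(θ)⁻¹‖` over all `θ ∈ W^{1,2}(0,L)` with
`∫₀^L (∂_sθ)² ≤ K` describing a closed curve. -/
theorem Pi_inv_uniform_bound (L K : ℝ) (hL : 0 < L) (hK : 0 < K) :
    ∃ M > 0, ∀ (g θ : ℝ → ℝ),
      MeasureTheory.IntegrableOn g (Set.Icc 0 L) →
      MeasureTheory.IntegrableOn (fun s => g s ^ 2) (Set.Icc 0 L) →
      (∫ s in (0:ℝ)..L, g s ^ 2) ≤ K →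
      (∀ s ∈ Set.Icc (0:ℝ) L, θ s = θ 0 + ∫ σ in (0:ℝ)..s, g σ) →
      (∫ s in (0:ℝ)..L, Real.cos (θ s)) = 0 →
      (∫ s in (0:ℝ)..L, Real.sin (θ s)) = 0 →
      (∃ k : ℤ, θ L - θ 0 = 2 * Real.pi * (k : ℝ)) →
      IsUnit (PiMat L θ) ∧ opNorm (PiMat L θ)⁻¹ ≤ M := by
  set m := min (L / 2) (1 / (8 * K)) with hm
  have hm0 : 0 < m := lt_min (by linarith) (by positivity)
  refine ⟨1 / m, by positivity, ?_⟩
  intro g θ hg hg2 hgK hθ hcosθ hsinθ _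
  have hθc : ContinuousOn θ (Icc 0 L) := by
    have h1 : IntegrableOn g (uIcc 0 L) := by rwa [uIcc_of_le hL.le]
    have h2 := intervalIntegral.continuousOn_primitive_interval (a := 0) (b := L) (μ := volume) h1
    rw [uIcc_of_le hL.le] at h2
    exact (continuousOn_const.add h2).congr hθ
  have hquad := quad_form L K hL hK g θ hg hg2 hgK hθ hθc hcosθ hsinθ
  rw [← hm] at hquad
  set A := ∫ s in (0:ℝ)..L, Real.sin (θ s) ^ 2 with hA
  set B := ∫ s in (0:ℝ)..L, Real.sin (θ s) * Real.cos (θ s) with hB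
  set C := ∫ s in (0:ℝ)..L, Real.cos (θ s) ^ 2 with hC
  have hmv : ∀ x : Fin 2 → ℝ,
      (PiMat L θ).mulVec x = ![A * x 0 - B * x 1, -(B * x 0) + C * x 1] := by
    intro x
    funext i
    fin_cases i <;>
      simp [PiMat, Matrix.mulVec, dotProduct, Fin.sum_univ_two, ← hA, ← hB, ← hC] <;>
      ring
  have hdet : (PiMat L θ).det ≠ 0 := by
    intro hdet0
    obtain ⟨v, hvne, hv⟩ := (Matrix.exists_mulVec_eq_zero_iff).2 hdet0
    rw [hmv v] at hv
    have h0 : A * v 0 - B * v 1 = 0 := by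
      have := congrFun hv 0; simpa using this
    have h1 : -(B * v 0) + C * v 1 = 0 := by
      have := congrFun hv 1; simpa using this
    have hq := hquad (v 0) (v 1)
    have hzero : v 0 ^ 2 * A - 2 * v 0 * v 1 * B + v 1 ^ 2 * C = 0 := by
      linear_combination v 0 * h0 + v 1 * h1
    have hsum : v 0 ^ 2 + v 1 ^ 2 ≤ 0 := by
      by_contra hpos
      push_neg at hpos
      nlinarith [mul_pos hm0 hpos]
    have hv0 : v 0 = 0 := by nlinarith [sq_nonneg (v 0), sq_nonneg (v 1)]
    have hv1 : v 1 = 0 := by nlinarith [sq_nonneg (v 0), sq_nonneg (v 1)]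
    apply hvne
    funext i
    fin_cases i
    · exact hv0
    · exact hv1
  have hIsUnit : IsUnit (PiMat L θ) :=
    (Matrix.isUnit_iff_isUnit_det _).2 (isUnit_iff_ne_zero.2 hdet)
  refine ⟨hIsUnit, ?_⟩
  -- lower bound for the quadratic form in Euclidean space
  have hlow : ∀ y : EuclideanSpace ℝ (Fin 2),
      m * ‖y‖ ≤ ‖Matrix.toEuclideanLin (PiMat L θ) y‖ := by
    intro y
    set w := Matrix.toEuclideanLin (PiMat L θ) y with hw
    have hinner : (inner ℝ y w : ℝ) = y 0 ^ 2 * A - 2 * y 0 * y 1 * B + y 1 ^ 2 * C := by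
      rw [hw, Matrix.toEuclideanLin_apply]
      simp [PiLp.inner_apply, RCLike.inner_apply, Matrix.mulVec, dotProduct,
        Fin.sum_univ_two, PiMat, ← hA, ← hB, ← hC]
      ring
    have hself : (inner ℝ y y : ℝ) = y 0 ^ 2 + y 1 ^ 2 := by
      simp only [PiLp.inner_apply, RCLike.inner_apply, conj_trivial, Fin.sum_univ_two]
      ring
    have hnorm2 : ‖y‖ ^ 2 = y 0 ^ 2 + y 1 ^ 2 := by
      rw [← real_inner_self_eq_norm_sq]
      exact hself
    have hq : m * ‖y‖ ^ 2 ≤ (inner ℝ y w : ℝ) := by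
      rw [hnorm2, hinner]
      exact hquad (y 0) (y 1)
    have hcs := real_inner_le_norm y w
    rcases eq_or_lt_of_le (norm_nonneg y) with hy0 | hy0
    · rw [← hy0]
      simp [norm_nonneg]
    · nlinarith [norm_nonneg w]
  rw [opNorm]
  apply ContinuousLinearMap.opNorm_le_bound _ (by positivity)
  intro x
  rw [LinearMap.coe_toContinuousLinearMap']
  set y := Matrix.toEuclideanLin (PiMat L θ)⁻¹ x with hy
  have hPy : Matrix.toEuclideanLin (PiMat L θ) y = x := by
    rw [hy, Matrix.toEuclideanLin_apply, Matrix.toEuclideanLin_apply]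
    simp only [Equiv.apply_symm_apply]
    rw [Matrix.mulVec_mulVec, Matrix.mul_nonsing_inv _ (isUnit_iff_ne_zero.2 hdet), Matrix.one_mulVec]
  have h := hlow y
  rw [hPy] at h
  rw [show (1:ℝ) / m * ‖x‖ = ‖x‖ / m by ring, le_div_iff₀ hm0]
  nlinarith [h]
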